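/- Let L be a c-lattice and 𝔛 an M-closed subset. If i is an 𝔛-element of L, then L_* \ (i] (the set of compact elements not below i) is an 𝔛-multiplicatively closed subset of L. -/

import Mathlib

namespace CompleteLattice

/-- The December 2024 Mathlib definition of a compact element of a complete lattice
(since removed from Mathlib in favour of the root-namespace `IsCompactElement`). -/
def IsCompactElement {α : Type*} [CompleteLattice α] (k : α) :=
  ∀ s : Set α, k ≤ sSup s → ∃ t : Finset α, ↑t ⊆ s ∧ k ≤ t.sup id

end CompleteLattice

/-- A multiplicative lattice: a complete lattice with a commutative, associative
multiplication distributing over arbitrary joins, with top as identity. -/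
class MultiplicativeLattice (L : Type*) extends CompleteLattice L, CommMonoid L where
  mul_sSup : ∀ (a : L) (S : Set L), a * sSup S = ⨆ b ∈ S, a * b
  one_eq_top : (1 : L) = ⊤

namespace MultiplicativeLattice

variable {L : Type*}

/-- A subset is M-closed if it is closed under multiplication. -/
def MClosed [MultiplicativeLattice L] (X : Set L) : Prop :=
  ∀ a ∈ X, ∀ b ∈ X, a * b ∈ X

/-- A proper element `i` is an `X`-element if `a * b ≤ i` and `a ∉ X` imply `b ≤ i`. -/
def IsXElement [MultiplicativeLattice L] (X : Set L) (i : L) : Prop :=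
  i ≠ ⊤ ∧ ∀ a b : L, a * b ≤ i → a ∉ X → b ≤ i

/-- A prime element. -/
def IsPrime [MultiplicativeLattice L] (p : L) : Prop :=
  p ≠ ⊤ ∧ ∀ a b : L, a * b ≤ p → a ≤ p ∨ b ≤ p

/-- The residual `(i : a) = ⋁ {x | x * a ≤ i}`. -/
def residual [MultiplicativeLattice L] (i a : L) : L := sSup {x : L | x * a ≤ i}

/-- The radical of an element. -/
def radical [MultiplicativeLattice L] (a : L) : L :=
  sSup {x : L | CompleteLattice.IsCompactElement x ∧ ∃ n : ℕ, x ^ (n + 1) ≤ a}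

/-- A primary element. -/
def IsPrimary [MultiplicativeLattice L] (i : L) : Prop :=
  i ≠ ⊤ ∧ ∀ a b : L, a * b ≤ i → a ≤ i ∨ b ≤ radical i

/-- A minimal prime element. -/
def IsMinimalPrime [MultiplicativeLattice L] (p : L) : Prop :=
  IsPrime p ∧ ∀ q : L, IsPrime q → q ≤ p → q = p

/-- An `X`-multiplicatively closed subset: a nonempty set `A` of compact elements
containing `L_* \ X`, with `a₁ ∈ L_* \ X` and `a₂ ∈ A` implying `a₁ * a₂ ∈ A`. -/
def IsXMultClosed [MultiplicativeLattice L] (X A : Set L) : Prop :=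
  A.Nonempty ∧ (∀ a ∈ A, CompleteLattice.IsCompactElement a) ∧
    ({c : L | CompleteLattice.IsCompactElement c} \ X) ⊆ A ∧
    ∀ a₁ ∈ ({c : L | CompleteLattice.IsCompactElement c} \ X), ∀ a₂ ∈ A, a₁ * a₂ ∈ A

end MultiplicativeLattice

/-- A c-lattice: a compactly generated multiplicative lattice in which `⊤` is compact
and the product of compact elements is compact. -/
class CLattice (L : Type*) extends MultiplicativeLattice L where
  compactlyGenerated : ∀ x : L,
    x = sSup {c : L | CompleteLattice.IsCompactElement c ∧ c ≤ x}
  compact_top : CompleteLattice.IsCompactElement (⊤ : L)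
  compact_mul : ∀ a b : L, CompleteLattice.IsCompactElement a →
    CompleteLattice.IsCompactElement b → CompleteLattice.IsCompactElement (a * b)

open MultiplicativeLattice CompleteLattice

theorem stmt17 {L : Type*} [CLattice L] (X : Set L) (hX : MClosed X)
    (i : L) (hi : IsXElement X i) :
    IsXMultClosed X {c : L | CompleteLattice.IsCompactElement c ∧ ¬ c ≤ i} := by
  obtain ⟨hne, hXel⟩ := hi
  refine ⟨⟨⊤, CLattice.compact_top, fun h => hne (top_le_iff.mp h)⟩,
    fun a ha => ha.1, ?_, ?_⟩
  · rintro a ⟨hac, hax⟩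
    refine ⟨hac, fun hle => hne (top_le_iff.mp ?_)⟩
    have : a * ⊤ ≤ i := by
      rw [← MultiplicativeLattice.one_eq_top, mul_one]; exact hle
    exact hXel a ⊤ this hax
  · rintro a₁ ⟨h1c, h1x⟩ a₂ ⟨h2c, h2i⟩
    exact ⟨CLattice.compact_mul a₁ a₂ h1c h2c,
      fun hle => h2i (hXel a₁ a₂ hle h1x)⟩
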